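/- Let P be a Markov operator on probability measures on [0,1] with predual U acting on C([0,1]), and suppose P is asymptotically stable on (0,1): it has a unique invariant measure μ* with μ*((0,1)) = 1 and ⟨Pⁿμ, φ⟩ → ⟨μ*, φ⟩ for every probability measure μ on (0,1) and continuous φ. Suppose moreover Uφ(0) = φ(0) and Uφ(1) = φ(1) for all φ. Then for every f ∈ C([0,1]) and every x ∈ [0,1] the sequence Uⁿf(x) converges: to f(0) if x = 0, to f(1) if x = 1, and to ∫ f dμ* if x ∈ (0,1). Consequently ‖Uⁿf − ∫ f dμ*‖_{L²(μ*)} → 0 for every f ∈ L²(μ*). -/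

import Mathlib

open MeasureTheory Filter unitInterval

set_option maxHeartbeats 1000000 in
/-- For a Markov operator `P` on probability measures on `[0,1]`
with predual `U` on `C([0,1])`, asymptotically stable on `(0,1)` with invariant
measure `μ*` and satisfying `Uφ(0) = φ(0)`, `Uφ(1) = φ(1)`: for every continuous `f`
the sequence `Uⁿf(x)` converges pointwise (to `f 0` at `0`, `f 1` at `1`, `∫ f dμ*`
inside), and consequently any `L²(μ*)`-contraction `U₂` extending `U` satisfies
`‖U₂ⁿ g − ∫ g dμ*‖_{L²(μ*)} → 0` for every `g ∈ L²(μ*)`. -/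
theorem stmt10
    (P : Measure I → Measure I)
    (hPprob : ∀ μ : Measure I, IsProbabilityMeasure μ → IsProbabilityMeasure (P μ))
    (U : C(I, ℝ) → C(I, ℝ))
    (hdual : ∀ (μ : Measure I), IsProbabilityMeasure μ → ∀ φ : C(I, ℝ),
      ∫ x, U φ x ∂μ = ∫ x, φ x ∂(P μ))
    (μstar : Measure I) (hstarprob : IsProbabilityMeasure μstar)
    (hstar01 : μstar {(0 : I), 1} = 0) (hstarinv : P μstar = μstar)
    (hstable : ∀ μ : Measure I, IsProbabilityMeasure μ → μ {(0 : I), 1} = 0 →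
      ∀ φ : C(I, ℝ),
        Tendsto (fun n => ∫ x, φ x ∂(P^[n] μ)) atTop (nhds (∫ x, φ x ∂μstar)))
    (hU0 : ∀ φ : C(I, ℝ), U φ 0 = φ 0) (hU1 : ∀ φ : C(I, ℝ), U φ 1 = φ 1) :
    (∀ f : C(I, ℝ), ∀ x : I,
      Tendsto (fun n => (U^[n] f) x) atTop
        (nhds (if x = 0 then f 0 else if x = 1 then f 1 else ∫ y, f y ∂μstar))) ∧
    (∀ U₂ : Lp ℝ 2 μstar →L[ℝ] Lp ℝ 2 μstar, ‖U₂‖ ≤ 1 →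
      (∀ φ : C(I, ℝ), U₂ (ContinuousMap.toLp 2 μstar ℝ φ) = ContinuousMap.toLp 2 μstar ℝ (U φ)) →
      ∀ g : Lp ℝ 2 μstar,
        Tendsto (fun n => ‖U₂^[n] g - Lp.const 2 μstar (∫ x, g x ∂μstar)‖)
          atTop (nhds 0)) := by
  -- iterates of P preserve probability
  have hPn : ∀ (μ : Measure I), IsProbabilityMeasure μ → ∀ n,
      IsProbabilityMeasure (P^[n] μ) := by
    intro μ hμ n
    induction n with
    | zero => simpa
    | succ n ih => rw [Function.iterate_succ_apply']; exact hPprob _ ih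
  -- representation of iterates of U via dirac measures
  have hrep : ∀ (φ : C(I, ℝ)) (n : ℕ) (x : I),
      (U^[n] φ) x = ∫ y, φ y ∂(P^[n] (Measure.dirac x)) := by
    intro φ n
    induction n generalizing φ with
    | zero => intro x; simp
    | succ n ih =>
      intro x
      rw [Function.iterate_succ_apply, ih (U φ) x, Function.iterate_succ_apply']
      exact hdual _ (hPn _ inferInstance n) φ
  -- uniform bound
  have hbound : ∀ (φ : C(I, ℝ)) (n : ℕ) (x : I), |(U^[n] φ) x| ≤ ‖φ‖ := by
    intro φ n x
    rw [hrep]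
    have hp := hPn (Measure.dirac x) inferInstance n
    have := norm_integral_le_of_norm_le_const
      (μ := P^[n] (Measure.dirac x)) (f := fun y => φ y) (C := ‖φ‖)
      (Eventually.of_forall fun y => φ.norm_coe_le_norm y)
    simpa [measure_univ] using this
  -- pointwise conclusion
  have hpt : ∀ f : C(I, ℝ), ∀ x : I,
      Tendsto (fun n => (U^[n] f) x) atTop
        (nhds (if x = 0 then f 0 else if x = 1 then f 1 else ∫ y, f y ∂μstar)) := by
    intro f x
    by_cases h0 : x = 0
    · subst h0
      have : ∀ n, (U^[n] f) 0 = f 0 := by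
        intro n
        induction n with
        | zero => simp
        | succ n ih => rw [Function.iterate_succ_apply', hU0]; exact ih
      simp only [this, if_pos rfl]
      exact tendsto_const_nhds
    · by_cases h1 : x = 1
      · subst h1
        have : ∀ n, (U^[n] f) 1 = f 1 := by
          intro n
          induction n with
          | zero => simp
          | succ n ih => rw [Function.iterate_succ_apply', hU1]; exact ih
        simp only [this, if_neg h0, if_pos rfl]
        exact tendsto_const_nhds
      · simp only [if_neg h0, if_neg h1]
        have hd0 : Measure.dirac x {(0 : I), 1} = 0 := by
          rw [Measure.dirac_apply]
          simp [Set.indicator_of_notMem, h0, h1]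
        have := hstable (Measure.dirac x) inferInstance hd0 f
        simpa only [← hrep] using this
  refine ⟨hpt, ?_⟩
  intro U₂ hU₂norm hU₂comm g
  -- a.e. facts
  have hae : ∀ᵐ x ∂μstar, x ∉ ({(0 : I), 1} : Set I) :=
    measure_eq_zero_iff_ae_notMem.mp hstar01
  -- U₂ iterates on continuous functions
  have hUn2 : ∀ (n : ℕ) (φ : C(I, ℝ)),
      U₂^[n] (ContinuousMap.toLp 2 μstar ℝ φ) = ContinuousMap.toLp 2 μstar ℝ (U^[n] φ) := by
    intro n
    induction n with
    | zero => intro φ; simp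
    | succ n ih =>
      intro φ
      rw [Function.iterate_succ_apply, hU₂comm, ih, Function.iterate_succ_apply]
  -- contraction
  have hcontr : ∀ (n : ℕ) (z : Lp ℝ 2 μstar), ‖U₂^[n] z‖ ≤ ‖z‖ := by
    intro n z
    induction n with
    | zero => simp
    | succ n ih =>
      rw [Function.iterate_succ_apply']
      calc ‖U₂ (U₂^[n] z)‖ ≤ ‖U₂‖ * ‖U₂^[n] z‖ := U₂.le_opNorm _
        _ ≤ 1 * ‖z‖ := by
            exact mul_le_mul hU₂norm ih (norm_nonneg _) zero_le_one
        _ = ‖z‖ := one_mul _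
  -- norm of constants
  have hconstnorm : ∀ d : ℝ, ‖Lp.const 2 μstar d‖ = |d| := by
    intro d
    rw [Lp.norm_const (μ := μstar) (p := 2) (c := d) (by norm_num)]
    simp [measure_univ, Real.norm_eq_abs]
  -- integral of Lp element bounded by L2 norm
  have hintle : ∀ h : Lp ℝ 2 μstar, |∫ x, h x ∂μstar| ≤ ‖h‖ := by
    intro h
    have h1 : (inner ℝ h (Lp.const 2 μstar (1 : ℝ)) : ℝ) = ∫ x, h x ∂μstar := by
      rw [MeasureTheory.L2.inner_def]
      refine integral_congr_ae ?_
      filter_upwards [Lp.coeFn_const 2 μstar (1 : ℝ)] with x hx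
      simp [hx, RCLike.inner_apply]
    calc |∫ x, h x ∂μstar| = |(inner ℝ h (Lp.const 2 μstar (1 : ℝ)) : ℝ)| := by rw [h1]
      _ ≤ ‖h‖ * ‖Lp.const 2 μstar (1 : ℝ)‖ := abs_real_inner_le_norm _ _
      _ = ‖h‖ := by rw [hconstnorm]; simp
  -- main convergence for continuous functions
  have hmain : ∀ φ : C(I, ℝ),
      Tendsto (fun n => ‖ContinuousMap.toLp 2 μstar ℝ (U^[n] φ)
          - Lp.const 2 μstar (∫ x, φ x ∂μstar)‖) atTop (nhds 0) := by
    intro φ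
    set c : ℝ := ∫ x, φ x ∂μstar with hc
    set a : ℕ → ℝ := fun n => ‖ContinuousMap.toLp 2 μstar ℝ (U^[n] φ)
        - Lp.const 2 μstar c‖ with ha
    have hsq : ∀ n, a n ^ 2 = ∫ x, ((U^[n] φ) x - c) ^ 2 ∂μstar := by
      intro n
      have := real_inner_self_eq_norm_sq (ContinuousMap.toLp 2 μstar ℝ (U^[n] φ)
        - Lp.const 2 μstar c)
      rw [← this, MeasureTheory.L2.inner_def]
      refine integral_congr_ae ?_
      filter_upwards [Lp.coeFn_sub (ContinuousMap.toLp 2 μstar ℝ (U^[n] φ))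
          (Lp.const 2 μstar c), ContinuousMap.coeFn_toLp (p := 2) (μ := μstar) (𝕜 := ℝ) (U^[n] φ),
          Lp.coeFn_const 2 μstar c] with x hx1 hx2 hx3
      have hx : (((ContinuousMap.toLp 2 μstar ℝ) (U^[n] φ)
          - (Lp.const 2 μstar) c : Lp ℝ 2 μstar) : I → ℝ) x = (U^[n] φ) x - c := by
        rw [hx1, Pi.sub_apply, hx2, hx3]
        rfl
      rw [RCLike.inner_apply, hx]
      simp [sq]
    have hsqto : Tendsto (fun n => a n ^ 2) atTop (nhds 0) := by
      simp only [hsq]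
      have h0 : (0 : ℝ) = ∫ (_ : I), (0 : ℝ) ∂μstar := by simp
      rw [h0]
      refine tendsto_integral_of_dominated_convergence
        (fun _ => (‖φ‖ + |c|) ^ 2) ?_ ?_ ?_ ?_
      · intro n
        exact (((U^[n] φ).continuous.sub continuous_const).pow 2).aestronglyMeasurable
      · exact integrable_const _
      · intro n
        refine Eventually.of_forall fun x => ?_
        have h1 : |(U^[n] φ) x - c| ≤ ‖φ‖ + |c| :=
          (abs_sub _ _).trans (add_le_add (hbound φ n x) le_rfl)
        calc ‖((U^[n] φ) x - c) ^ 2‖ = |(U^[n] φ) x - c| ^ 2 := by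
              rw [Real.norm_eq_abs, abs_pow]
          _ ≤ (‖φ‖ + |c|) ^ 2 := by
              exact pow_le_pow_left₀ (abs_nonneg _) h1 2
      · filter_upwards [hae] with x hx
        have hx0 : x ≠ 0 := fun h => hx (by simp [h])
        have hx1 : x ≠ 1 := fun h => hx (by simp [h])
        have := hpt φ x
        rw [if_neg hx0, if_neg hx1] at this
        have h2 : Tendsto (fun n => (U^[n] φ) x - c) atTop (nhds 0) := by
          simpa [← hc] using this.sub_const c
        simpa using h2.pow 2
    have hnn : ∀ n, a n = Real.sqrt (a n ^ 2) := fun n =>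
      (Real.sqrt_sq (norm_nonneg _)).symm
    have : Tendsto (fun n => Real.sqrt (a n ^ 2)) atTop (nhds 0) := by
      have := (Real.continuous_sqrt.tendsto 0).comp hsqto
      simpa [Function.comp_def] using this
    simpa only [← hnn] using this
  -- final assembly
  set c : ℝ := ∫ x, g x ∂μstar with hcdef
  rw [Metric.tendsto_atTop]
  intro ε hε
  obtain ⟨φ, hφ⟩ : ∃ φ : C(I, ℝ), ‖g - ContinuousMap.toLp 2 μstar ℝ φ‖ < ε / 3 := by
    have hdr : DenseRange (ContinuousMap.toLp 2 μstar ℝ : C(I,ℝ) →L[ℝ] Lp ℝ 2 μstar) :=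
      ContinuousMap.toLp_denseRange (𝕜 := ℝ) (E := ℝ) (μ := μstar) (by norm_num)
    obtain ⟨φ, hφ⟩ := hdr.exists_dist_lt g (by positivity : (0:ℝ) < ε / 3)
    exact ⟨φ, by rwa [dist_eq_norm] at hφ⟩
  set c' : ℝ := ∫ x, φ x ∂μstar with hc'def
  have hcc' : |c' - c| ≤ ‖g - ContinuousMap.toLp 2 μstar ℝ φ‖ := by
    have hint : ∫ x, (ContinuousMap.toLp 2 μstar ℝ φ) x ∂μstar = c' := by
      refine integral_congr_ae ?_
      exact (ContinuousMap.coeFn_toLp (p := 2) (μ := μstar) (𝕜 := ℝ) φ)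
    have h2 : |∫ x, (g - ContinuousMap.toLp 2 μstar ℝ φ) x ∂μstar|
        ≤ ‖g - ContinuousMap.toLp 2 μstar ℝ φ‖ := hintle _
    have h3 : ∫ x, (g - ContinuousMap.toLp 2 μstar ℝ φ) x ∂μstar = c - c' := by
      have hgi : Integrable (fun x => g x) μstar :=
        (Lp.memLp g).integrable (by norm_num)
      have hφi : Integrable (fun x => (ContinuousMap.toLp 2 μstar ℝ φ) x) μstar :=
        (Lp.memLp _).integrable (by norm_num)
      calc ∫ x, (g - ContinuousMap.toLp 2 μstar ℝ φ) x ∂μstar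
          = ∫ x, (g x - (ContinuousMap.toLp 2 μstar ℝ φ) x) ∂μstar :=
            integral_congr_ae (Lp.coeFn_sub _ _)
        _ = c - c' := by rw [integral_sub hgi hφi, hint]
    rw [h3] at h2
    calc |c' - c| = |c - c'| := abs_sub_comm _ _
      _ ≤ _ := h2
  obtain ⟨N, hN⟩ := (Metric.tendsto_atTop.mp (hmain φ)) (ε / 3) (by positivity)
  refine ⟨N, fun n hn => ?_⟩
  rw [Real.dist_eq, sub_zero, abs_of_nonneg (norm_nonneg _)]
  have key : ‖U₂^[n] g - Lp.const 2 μstar c‖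
      ≤ ‖g - ContinuousMap.toLp 2 μstar ℝ φ‖
        + ‖ContinuousMap.toLp 2 μstar ℝ (U^[n] φ) - Lp.const 2 μstar c'‖
        + |c' - c| := by
    have hdecomp : U₂^[n] g - Lp.const 2 μstar c
        = U₂^[n] (g - ContinuousMap.toLp 2 μstar ℝ φ)
          + (ContinuousMap.toLp 2 μstar ℝ (U^[n] φ) - Lp.const 2 μstar c')
          + (Lp.const 2 μstar c' - Lp.const 2 μstar c) := by
      have hsub : ∀ (a b : Lp ℝ 2 μstar), U₂^[n] (a - b) = U₂^[n] a - U₂^[n] b := by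
        intro a b
        induction n with
        | zero => simp
        | succ m ih => simp [Function.iterate_succ_apply', ih, map_sub]
      rw [hsub, hUn2 n φ]
      abel
    calc ‖U₂^[n] g - Lp.const 2 μstar c‖
        ≤ ‖U₂^[n] (g - ContinuousMap.toLp 2 μstar ℝ φ)
            + (ContinuousMap.toLp 2 μstar ℝ (U^[n] φ) - Lp.const 2 μstar c')‖
          + ‖Lp.const 2 μstar c' - Lp.const 2 μstar c‖ := by
          rw [hdecomp]; exact norm_add_le _ _
      _ ≤ ‖U₂^[n] (g - ContinuousMap.toLp 2 μstar ℝ φ)‖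
          + ‖ContinuousMap.toLp 2 μstar ℝ (U^[n] φ) - Lp.const 2 μstar c'‖
          + ‖Lp.const 2 μstar c' - Lp.const 2 μstar c‖ := by
          exact add_le_add_left (norm_add_le _ _) _
      _ ≤ ‖g - ContinuousMap.toLp 2 μstar ℝ φ‖
          + ‖ContinuousMap.toLp 2 μstar ℝ (U^[n] φ) - Lp.const 2 μstar c'‖
          + |c' - c| := by
          refine add_le_add (add_le_add (hcontr n _) le_rfl) ?_
          rw [← map_sub (Lp.const 2 μstar), hconstnorm]
    done
  calc ‖U₂^[n] g - Lp.const 2 μstar c‖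
      ≤ ‖g - ContinuousMap.toLp 2 μstar ℝ φ‖
        + ‖ContinuousMap.toLp 2 μstar ℝ (U^[n] φ) - Lp.const 2 μstar c'‖
        + |c' - c| := key
    _ < ε / 3 + ε / 3 + ε / 3 := by
        refine add_lt_add_of_lt_of_le (add_lt_add hφ ?_) (hcc'.trans_lt hφ).le
        have := hN n hn
        rwa [Real.dist_eq, sub_zero, abs_of_nonneg (norm_nonneg _)] at this
    _ = ε := by ring
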